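/- Let E be a complex Banach space, U ⊆ ℂ open, and c : ℂ → E a map such that for every continuous complex-linear functional λ : E → ℂ the composition λ ∘ c is holomorphic on U. Then c is holomorphic (complex differentiable) on U. (Dunford's theorem; this underlies the definition of holomorphic curves via functionals in the convenient calculus of holomorphic mappings.) -/

import Mathlib

open Metric Complex Set NormedSpace

/-- Dunford's theorem: a scalarwise holomorphic map into a complex Banach space
is holomorphic. -/
theorem holomorphic_of_scalarwise_holomorphic {E : Type*} [NormedAddCommGroup E]
    [NormedSpace ℂ E] [CompleteSpace E] (U : Set ℂ) (hU : IsOpen U) (c : ℂ → E)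
    (h : ∀ l : E →L[ℂ] ℂ, DifferentiableOn ℂ (fun z => l (c z)) U) :
    DifferentiableOn ℂ c U := by
  -- Step 1: `c` is continuous at each point of `U`.
  have hcont : ∀ z₀ ∈ U, ContinuousAt c z₀ := by
    intro z₀ hz₀
    obtain ⟨r, hr0, hrU⟩ := Metric.nhds_basis_closedBall.mem_iff.mp (hU.mem_nhds hz₀)
    -- the difference quotients, viewed in the double dual
    set g : (closedBall z₀ r × closedBall z₀ r) → StrongDual ℂ (StrongDual ℂ E) :=
      fun p => inclusionInDoubleDualLi ℂ
        (((p.1 : ℂ) - (p.2 : ℂ))⁻¹ • (c p.1 - c p.2)) with hg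
    have hbound : ∀ l : StrongDual ℂ E, ∃ C, ∀ p, ‖g p l‖ ≤ C := by
      intro l
      have hfd : DifferentiableOn ℂ (fun z => l (c z)) U := h l
      have hfa : AnalyticOnNhd ℂ (fun z => l (c z)) U := hfd.analyticOnNhd hU
      have hdc : ContinuousOn (deriv fun z => l (c z)) (closedBall z₀ r) :=
        (hfa.deriv.continuousOn).mono hrU
      obtain ⟨C, hC⟩ := (isCompact_closedBall z₀ r).exists_bound_of_continuousOn hdc
      have hC0 : 0 ≤ C := le_trans (norm_nonneg _) (hC z₀ (mem_closedBall_self hr0.le))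
      refine ⟨C, fun p => ?_⟩
      have hlip : ‖l (c p.1) - l (c p.2)‖ ≤ C * ‖(p.1 : ℂ) - (p.2 : ℂ)‖ :=
        (convex_closedBall z₀ r).norm_image_sub_le_of_norm_deriv_le
          (fun x hx => hfd.differentiableAt (hU.mem_nhds (hrU hx)))
          hC p.2.2 p.1.2
      have : g p l = ((p.1 : ℂ) - (p.2 : ℂ))⁻¹ • (l (c p.1) - l (c p.2)) := by
        simp [hg, inclusionInDoubleDualLi, inclusionInDoubleDual, map_smul]
      rw [this]
      by_cases hzw : (p.1 : ℂ) = (p.2 : ℂ)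
      · simp [hzw, hC0]
      · have hne : ‖(p.1 : ℂ) - (p.2 : ℂ)‖ ≠ 0 := by
          simpa [sub_eq_zero] using hzw
        rw [norm_smul, norm_inv]
        calc ‖(p.1 : ℂ) - (p.2 : ℂ)‖⁻¹ * ‖l (c p.1) - l (c p.2)‖
            ≤ ‖(p.1 : ℂ) - (p.2 : ℂ)‖⁻¹ * (C * ‖(p.1 : ℂ) - (p.2 : ℂ)‖) := by
              gcongr
          _ = C := by
              field_simp
    obtain ⟨C', hC'⟩ := banach_steinhaus hbound
    have hC'0 : 0 ≤ C' := le_trans (norm_nonneg _) (hC' ⟨⟨z₀, mem_closedBall_self hr0.le⟩,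
      ⟨z₀, mem_closedBall_self hr0.le⟩⟩)
    have key : ∀ z ∈ closedBall z₀ r, ∀ w ∈ closedBall z₀ r,
        dist (c z) (c w) ≤ C' * dist z w := by
      intro z hz w hw
      by_cases hzw : z = w
      · simp [hzw, mul_nonneg hC'0 dist_nonneg]
      · have hnorm : ‖(z - w)⁻¹ • (c z - c w)‖ ≤ C' := by
          have := hC' ⟨⟨z, hz⟩, ⟨w, hw⟩⟩
          rwa [hg, (inclusionInDoubleDualLi ℂ).norm_map] at this
        have hne : ‖z - w‖ ≠ 0 := by simpa [sub_eq_zero] using hzw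
        rw [dist_eq_norm, dist_eq_norm]
        rw [norm_smul, norm_inv] at hnorm
        calc ‖c z - c w‖ = ‖z - w‖ * (‖z - w‖⁻¹ * ‖c z - c w‖) := by
              rw [← mul_assoc, mul_inv_cancel₀ hne, one_mul]
          _ ≤ ‖z - w‖ * C' := by gcongr
          _ = C' * ‖z - w‖ := mul_comm _ _
    have hlip : LipschitzOnWith C'.toNNReal c (closedBall z₀ r) := by
      apply LipschitzOnWith.of_dist_le_mul
      intro x hx y hy
      exact (key x hx y hy).trans
        (mul_le_mul_of_nonneg_right (Real.le_coe_toNNReal C') dist_nonneg)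
    exact (hlip.continuousOn.continuousAt (closedBall_mem_nhds z₀ hr0))
  have hcU : ContinuousOn c U := fun z hz => (hcont z hz).continuousWithinAt
  -- Step 2: use the vector-valued Cauchy integral
  intro z₀ hz₀
  obtain ⟨r, hr0, hrU⟩ := Metric.nhds_basis_closedBall.mem_iff.mp (hU.mem_nhds hz₀)
  have hsphere : sphere z₀ r ⊆ U := fun z hz => hrU (sphere_subset_closedBall hz)
  have hci : CircleIntegrable c z₀ r := (hcU.mono hsphere).circleIntegrable hr0.le
  set R : NNReal := r.toNNReal with hRdef
  have hRr : (R : ℝ) = r := Real.coe_toNNReal r hr0.le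
  have hR : 0 < R := Real.toNNReal_pos.mpr hr0
  have hg := hasFPowerSeriesOn_cauchy_integral (f := c) (c := z₀) (R := R)
    (by rwa [hRr]) hR
  simp only [hRr] at hg
  have heq : ∀ w ∈ ball z₀ r,
      c w = (2 * Real.pi * I : ℂ)⁻¹ • ∮ z in C(z₀, r), (z - w)⁻¹ • c z := by
    intro w hw
    apply (eq_iff_forall_dual_eq ℂ).mpr
    intro l
    have hne : ∀ z ∈ sphere z₀ r, z ≠ w := by
      intro z hz hzw
      exact absurd (hzw ▸ hz) (mem_ball.mp hw).ne
    have hci2 : CircleIntegrable (fun z => (z - w)⁻¹ • c z) z₀ r :=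
      ContinuousOn.circleIntegrable hr0.le
        (((continuousOn_id.sub continuousOn_const).inv₀
          (fun z hz => sub_ne_zero.2 (hne z hz))).smul (hcU.mono hsphere))
    have h1 : l (∮ z in C(z₀, r), (z - w)⁻¹ • c z)
        = ∮ z in C(z₀, r), (z - w)⁻¹ • l (c z) := by
      rw [circleIntegral, circleIntegral, ← l.intervalIntegral_comp_comm hci2.out]
      simp only [map_smul, smul_eq_mul]
    have key : (∮ z in C(z₀, r), (z - w)⁻¹ • l (c z))
        = (2 * Real.pi * I : ℂ) • l (c w) :=
      circleIntegral_sub_inv_smul_of_differentiable_on_off_countable (s := ∅)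
        countable_empty hw (l.continuous.comp_continuousOn (hcU.mono hrU))
        (fun x hx => (h l).differentiableAt
          (hU.mem_nhds (hrU (ball_subset_closedBall hx.1))))
    rw [map_smul, h1, key, smul_smul, inv_mul_cancel₀ two_pi_I_ne_zero, one_smul]
  have hev : c =ᶠ[nhds z₀]
      (fun w => (2 * Real.pi * I : ℂ)⁻¹ • ∮ z in C(z₀, r), (z - w)⁻¹ • c z) :=
    Filter.eventually_of_mem (ball_mem_nhds z₀ hr0) heq
  exact ((hg.analyticAt.differentiableAt).congr_of_eventuallyEq hev).differentiableWithinAt
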